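/- Let k be a finite field with q elements, k_f its degree-f extension, and e > 0 a divisor of q^f − 1. For ξ ∈ k_f^×, the condition ξ^{q−1} ∈ (k_f^×)^e is equivalent to the condition ξ^{(q^f−1)/e} ∈ k^×. -/

import Mathlib

/-- In a finite cyclic group, `y` is an `e`-th power iff `y ^ (card G / e) = 1`. -/
lemma aux_pow_range {G : Type} [CommGroup G] [Fintype G] [IsCyclic G] {e : ℕ} (he : 0 < e)
    (hed : e ∣ Fintype.card G) (y : G) :
    y ∈ (powMonoidHom e : G →* G).range ↔ y ^ (Fintype.card G / e) = 1 := by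
  constructor
  · rintro ⟨x, rfl⟩
    show (x ^ e) ^ _ = 1
    rw [← pow_mul, Nat.mul_div_cancel' hed, pow_card_eq_one]
  · intro h
    obtain ⟨g, hg⟩ := IsCyclic.exists_generator (α := G)
    obtain ⟨m, rfl⟩ := mem_powers_iff_mem_zpowers.2 (hg y)
    have hn : orderOf g = Fintype.card G := by
      rw [orderOf_eq_card_of_forall_mem_zpowers hg, Nat.card_eq_fintype_card]
    rw [← pow_mul, ← orderOf_dvd_iff_pow_eq_one, hn] at h
    have hpos : 0 < Fintype.card G / e := Nat.div_pos (Nat.le_of_dvd Fintype.card_pos hed) he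
    have hem : e ∣ m := by
      have h2 : e * (Fintype.card G / e) ∣ m * (Fintype.card G / e) := by
        rwa [Nat.mul_div_cancel' hed]
      exact (Nat.mul_dvd_mul_iff_right hpos).1 h2
    obtain ⟨t, rfl⟩ := hem
    exact ⟨g ^ t, by rw [powMonoidHom_apply, ← pow_mul, mul_comm]⟩

/-- A unit of `kf` is in the image of `kˣ` iff it is fixed by `x ↦ x ^ card k`. -/
lemma aux_mem_range {k kf : Type} [Field k] [Field kf] [Algebra k kf] [Fintype k] [Fintype kf]
    (ζ : kfˣ) :
    ζ ∈ (Units.map (algebraMap k kf).toMonoidHom).range ↔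
      (ζ : kf) ^ Fintype.card k = (ζ : kf) := by
  classical
  constructor
  · rintro ⟨a, rfl⟩
    show (algebraMap k kf a) ^ Fintype.card k = algebraMap k kf a
    rw [← map_pow, FiniteField.pow_card]
  · intro h
    set P : Polynomial kf := Polynomial.X ^ Fintype.card k - Polynomial.X with hPdef
    have hq1 : 1 < Fintype.card k := Fintype.one_lt_card
    have hP : P ≠ 0 := FiniteField.X_pow_card_sub_X_ne_zero kf hq1
    set A : Finset kf := Finset.univ.image (algebraMap k kf) with hAdef
    have hAcard : A.card = Fintype.card k := by
      rw [hAdef, Finset.card_image_of_injective _ (algebraMap k kf).injective, Finset.card_univ]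
    have hsub : A ⊆ P.roots.toFinset := by
      intro x hx
      obtain ⟨a, _, rfl⟩ := Finset.mem_image.1 hx
      rw [Multiset.mem_toFinset, Polynomial.mem_roots hP]
      simp [hPdef, Polynomial.IsRoot, sub_eq_zero, ← map_pow, FiniteField.pow_card]
    have hroot : (ζ : kf) ∈ P.roots.toFinset := by
      rw [Multiset.mem_toFinset, Polynomial.mem_roots hP]
      simp [hPdef, Polynomial.IsRoot, sub_eq_zero, h]
    have hle : P.roots.toFinset.card ≤ Fintype.card k := by
      calc P.roots.toFinset.card ≤ Multiset.card P.roots := Multiset.toFinset_card_le _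
        _ ≤ P.natDegree := Polynomial.card_roots' P
        _ = Fintype.card k := FiniteField.X_pow_card_sub_X_natDegree_eq kf hq1
    have heq : A = P.roots.toFinset :=
      Finset.eq_of_subset_of_card_le hsub (hle.trans hAcard.ge)
    rw [← heq, hAdef, Finset.mem_image] at hroot
    obtain ⟨a, -, ha⟩ := hroot
    have ha0 : a ≠ 0 := by
      rintro rfl
      exact ζ.ne_zero (by simpa using ha.symm)
    exact ⟨Units.mk0 a ha0, Units.ext (by simpa using ha)⟩

/-- **Two equivalent conditions on `ξ ∈ k_fˣ`.**  Let `k ⊆ k_f` be finite fields of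
cardinalities `q` and `q^f`, and let `e > 0` divide `q^f - 1`.  For `ξ ∈ k_fˣ`, the condition
`ξ^(q-1) ∈ (k_fˣ)^e` is equivalent to `ξ^((q^f-1)/e) ∈ k^×` (where `k^×` is identified with
its image in `k_fˣ`). -/
theorem stmt_5 (q f e : ℕ) (he : 0 < e) (k kf : Type) [Field k] [Field kf] [Algebra k kf]
    [Fintype k] [Fintype kf]
    (hq : Fintype.card k = q) (hqf : Fintype.card kf = q ^ f) (hef : e ∣ q ^ f - 1)
    (ξ : kfˣ) :
    ξ ^ (q - 1) ∈ (powMonoidHom e : kfˣ →* kfˣ).range ↔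
    ξ ^ ((q ^ f - 1) / e) ∈ (Units.map (algebraMap k kf).toMonoidHom).range := by
  subst hq
  letI : Fintype kfˣ := Fintype.ofFinite _
  have hq1 : 1 < Fintype.card k := Fintype.one_lt_card
  have hcard : Fintype.card kfˣ = Fintype.card k ^ f - 1 := by
    rw [← Nat.card_eq_fintype_card, Nat.card_units, Nat.card_eq_fintype_card, hqf]
  have key : ∀ x : kfˣ, ((x : kf) ^ Fintype.card k = (x : kf)) ↔ x ^ (Fintype.card k - 1) = 1 := by
    intro x
    rw [← Units.val_pow_eq_pow_val, Units.val_inj]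
    conv_lhs => rw [show Fintype.card k = (Fintype.card k - 1) + 1 by omega]
    rw [pow_succ, mul_eq_right]
  rw [aux_pow_range he (by rw [hcard]; exact hef), aux_mem_range, hcard, key, ← pow_mul,
    ← pow_mul, Nat.mul_comm]
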